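/- Let d ≥ 2 be an integer, let G be a finite connected 2d-regular simple graph on n vertices with m edges, and let W be an Eulerian circuit of G, viewed as a cyclic sequence of m vertex occurrences (position i carries the i-th vertex visited by W, indices taken modulo m, and each vertex of G occurs exactly d times). Then there exists a set S of positions of size n such that the map sending each position in S to the vertex occurring at that position is a bijection from S onto the vertex set of G, and there exist four cyclically consecutive positions i, i+1, i+2, i+3 (mod m) with i ∈ S, i+1 ∈ S, i+3 ∈ S, and i+2 ∉ S. -/
import Mathlib

open SimpleGraph Walk

private lemma walk_edges_getElem {V : Type*} {G : SimpleGraph V} {u v : V} (p : G.Walk u v) :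
    ∀ (i : ℕ) (h : i < p.length),
      p.edges[i]'(by rwa [SimpleGraph.Walk.length_edges]) =
        s(p.getVert i, p.getVert (i + 1)) := by
  induction p with
  | nil => intro i h; simp at h
  | cons hadj q ih =>
    intro i h
    cases i with
    | zero => simp [SimpleGraph.Walk.edges_cons, SimpleGraph.Walk.getVert_cons_succ]
    | succ n =>
      simpa [SimpleGraph.Walk.edges_cons, SimpleGraph.Walk.getVert_cons_succ] using
        ih n (by simpa using h)

private lemma trail_getVert_ne {V : Type*} {G : SimpleGraph V} {u v : V} {p : G.Walk u v}
    (ht : p.IsTrail) {j : ℕ} (hj : j + 2 ≤ p.length) :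
    p.getVert j ≠ p.getVert (j + 2) := by
  intro hEq
  have h1 : j < p.length := by omega
  have h2 : j + 1 < p.length := by omega
  have e1 := walk_edges_getElem p j h1
  have e2 := walk_edges_getElem p (j + 1) h2
  have hne : p.edges[j]'(by rwa [SimpleGraph.Walk.length_edges]) ≠
      p.edges[j+1]'(by rwa [SimpleGraph.Walk.length_edges]) := by
    intro hcontra
    have := (List.Nodup.getElem_inj_iff ht.edges_nodup).mp hcontra
    omega
  apply hne
  rw [e1, e2, hEq]
  exact Sym2.eq_swap

theorem euler_tour_real_vertex_selection
    {V : Type*} [Fintype V] [DecidableEq V] (G : SimpleGraph V) [DecidableRel G.Adj]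
    (d : ℕ) (hd : 2 ≤ d) (hreg : G.IsRegularOfDegree (2 * d)) (hconn : G.Connected)
    (v : V) (p : G.Walk v v) (hp : p.IsEulerian) :
    ∃ S : Finset ℕ,
      (∀ i ∈ S, i < p.length) ∧
      S.card = Fintype.card V ∧
      Set.BijOn (fun i => p.getVert i) ↑S (Set.univ : Set V) ∧
      ∃ i < p.length, i ∈ S ∧ (i + 1) % p.length ∈ S ∧
        (i + 3) % p.length ∈ S ∧ (i + 2) % p.length ∉ S := by
  classical
  -- every vertex has a neighbor
  have hnbr : ∀ w : V, ∃ u, G.Adj w u := by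
    intro w
    have hcard : (G.neighborFinset w).Nonempty := by
      rw [← Finset.card_pos, card_neighborFinset_eq_degree, hreg w]; omega
    obtain ⟨u, hu⟩ := hcard
    exact ⟨u, (SimpleGraph.mem_neighborFinset G w u).mp hu⟩
  -- p has positive length
  have hlenpos : 0 < p.length := by
    obtain ⟨u, hu⟩ := hnbr v
    have : s(v, u) ∈ p.edges := (hp.mem_edges_iff).mpr (G.mem_edgeSet.mpr hu)
    have hne : p.edges ≠ [] := by intro h; rw [h] at this; simp at this
    have := List.length_pos_iff.mpr hne
    rwa [SimpleGraph.Walk.length_edges] at this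
  -- every vertex occurs at a position < p.length
  have hocc : ∀ w : V, ∃ j, j < p.length ∧ p.getVert j = w := by
    intro w
    obtain ⟨u, hu⟩ := hnbr w
    have hmem : s(w, u) ∈ p.edges := (hp.mem_edges_iff).mpr (G.mem_edgeSet.mpr hu)
    have hsup : w ∈ p.support := SimpleGraph.Walk.fst_mem_support_of_mem_edges p hmem
    obtain ⟨n, hn, hnle⟩ := SimpleGraph.Walk.mem_support_iff_exists_getVert.mp hsup
    rcases Nat.lt_or_ge n p.length with h | h
    · exact ⟨n, h, hn⟩
    · refine ⟨0, hlenpos, ?_⟩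
      rw [SimpleGraph.Walk.getVert_zero]
      rw [SimpleGraph.Walk.getVert_of_length_le p h] at hn
      exact hn
  -- card V > 4
  have hcardV : 4 < Fintype.card V := by
    have := G.degree_lt_card_verts v
    rw [hreg v] at this; omega
  -- find i with i+3 < length and getVert i ≠ getVert (i+3)
  have hex : ∃ i, i + 3 < p.length ∧ p.getVert i ≠ p.getVert (i + 3) := by
    by_contra hcon
    push_neg at hcon
    have hper : ∀ j, j < p.length → p.getVert j ∈
        ({p.getVert 0, p.getVert 1, p.getVert 2} : Finset V) := by
      intro j
      induction j using Nat.strong_induction_on with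
      | _ j ih =>
        intro hj
        rcases Nat.lt_or_ge j 3 with h3 | h3
        · interval_cases j <;> simp
        · have : p.getVert (j - 3) = p.getVert ((j - 3) + 3) := hcon (j - 3) (by omega)
          have heq : p.getVert j = p.getVert (j - 3) := by
            rw [this]; congr 1; omega
          rw [heq]
          exact ih (j - 3) (by omega) (by omega)
    have hsub : (Finset.univ : Finset V) ⊆
        ({p.getVert 0, p.getVert 1, p.getVert 2} : Finset V) := by
      intro w _
      obtain ⟨j, hj, hjw⟩ := hocc w
      rw [← hjw]
      exact hper j hj
    have := Finset.card_le_card hsub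
    rw [Finset.card_univ] at this
    have h3 : ({p.getVert 0, p.getVert 1, p.getVert 2} : Finset V).card ≤ 3 := by
      apply le_trans (Finset.card_insert_le _ _)
      have := Finset.card_insert_le (p.getVert 1) ({p.getVert 2} : Finset V)
      simp at this ⊢
      omega
    omega
  obtain ⟨i, hi3, hae⟩ := hex
  set a := p.getVert i with ha
  set b := p.getVert (i + 1) with hb
  set c := p.getVert (i + 2) with hc
  set e := p.getVert (i + 3) with he
  have hab : a ≠ b := G.ne_of_adj (p.adj_getVert_succ (by omega))
  have hbc : b ≠ c := by
    have := p.adj_getVert_succ (i := i + 1) (by omega)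
    exact G.ne_of_adj this
  have hce : c ≠ e := by
    have := p.adj_getVert_succ (i := i + 2) (by omega)
    exact G.ne_of_adj this
  have hbe : b ≠ e := by
    have := trail_getVert_ne hp.isTrail (j := i + 1) (by omega)
    simpa [show i + 1 + 2 = i + 3 by omega] using this
  -- a second occurrence of c, distinct from i+2
  have hsec : ∃ j, j < p.length ∧ j ≠ i + 2 ∧ p.getVert j = c := by
    have hnsub : ¬ (G.neighborFinset c ⊆ ({b, e} : Finset V)) := by
      intro hsub
      have h1 := Finset.card_le_card hsub
      rw [card_neighborFinset_eq_degree, hreg c] at h1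
      have h2 : ({b, e} : Finset V).card ≤ 2 := Finset.card_insert_le _ _ |>.trans (by simp)
      omega
    obtain ⟨u, hu, hunb⟩ := Finset.not_subset.mp hnsub
    have huadj : G.Adj c u := (SimpleGraph.mem_neighborFinset G c u).mp hu
    have hub : u ≠ b := fun h => hunb (by simp [h])
    have hue : u ≠ e := fun h => hunb (by simp [h])
    have hmem : s(c, u) ∈ p.edges := (hp.mem_edges_iff).mpr (G.mem_edgeSet.mpr huadj)
    obtain ⟨k, hk, hkeq⟩ := List.mem_iff_getElem.mp hmem
    rw [SimpleGraph.Walk.length_edges] at hk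
    rw [walk_edges_getElem p k hk] at hkeq
    rcases Sym2.eq_iff.mp hkeq with ⟨h1, h2⟩ | ⟨h1, h2⟩
    · refine ⟨k, hk, ?_, h1⟩
      intro hkcon
      apply hue
      rw [← h2, hkcon]
    ·
      -- second case: getVert k = u, getVert (k+1) = c
      have hk1 : k + 1 ≠ i + 2 := by
        intro hkcon
        apply hub
        rw [← h1, show k = i + 1 by omega]
      rcases Nat.lt_or_ge (k + 1) p.length with hlt | hge
      · exact ⟨k + 1, hlt, hk1, h2⟩
      · refine ⟨0, hlenpos, by omega, ?_⟩
        rw [SimpleGraph.Walk.getVert_zero]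
        have : k + 1 = p.length := by omega
        rw [this] at h2
        rw [SimpleGraph.Walk.getVert_length] at h2
        exact h2.symm ▸ rfl
  obtain ⟨j2, hj2len, hj2ne, hj2eq⟩ := hsec
  -- choice of generic occurrences
  choose occ hocclt hocceq using hocc
  -- the selection function
  set f : V → ℕ := fun w =>
    if w = a then i else if w = b then i + 1 else if w = e then i + 3
    else if w = c then j2 else occ w with hf
  have hfP : ∀ w : V, f w < p.length ∧ p.getVert (f w) = w ∧ f w ≠ i + 2 := by
    intro w
    by_cases h1 : w = a
    · subst h1
      rw [show f a = i by simp [hf]]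
      exact ⟨by omega, rfl, by omega⟩
    by_cases h2 : w = b
    · subst h2
      rw [show f b = i + 1 by simp [hf, Ne.symm hab]]
      exact ⟨by omega, rfl, by omega⟩
    by_cases h3 : w = e
    · subst h3
      rw [show f e = i + 3 by simp [hf, Ne.symm hae, Ne.symm hbe]]
      exact ⟨by omega, rfl, by omega⟩
    by_cases h4 : w = c
    · subst h4
      by_cases h5 : c = a
      · rw [show f c = i by simp [hf, h5]]
        exact ⟨by omega, h5.symm, by omega⟩
      · rw [show f c = j2 by simp [hf, h5, Ne.symm hbc, hce]]
        exact ⟨hj2len, hj2eq, hj2ne⟩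
    · rw [show f w = occ w by simp [hf, h1, h2, h3, h4]]
      refine ⟨hocclt w, hocceq w, ?_⟩
      intro hcon
      apply h4
      rw [← hocceq w, hcon]
  have hfinj : Function.Injective f := by
    intro w1 w2 h
    have := (hfP w1).2.1
    rw [h, (hfP w2).2.1] at this
    exact this.symm
  refine ⟨Finset.univ.image f, ?_, ?_, ?_, ?_⟩
  · intro s hs
    obtain ⟨w, _, rfl⟩ := Finset.mem_image.mp hs
    exact (hfP w).1
  · rw [Finset.card_image_of_injective _ hfinj, Finset.card_univ]
  · refine ⟨fun _ _ => Set.mem_univ _, ?_, ?_⟩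
    · intro s hs t ht hst
      simp only [Finset.coe_image, Set.mem_image] at hs ht
      obtain ⟨w1, _, rfl⟩ := hs
      obtain ⟨w2, _, rfl⟩ := ht
      simp only at hst
      rw [(hfP w1).2.1, (hfP w2).2.1] at hst
      rw [hst]
    · intro w _
      exact ⟨f w, by simp [Finset.coe_image], (hfP w).2.1⟩
  · refine ⟨i, by omega, ?_, ?_, ?_, ?_⟩
    · refine Finset.mem_image.mpr ⟨a, Finset.mem_univ _, ?_⟩
      rw [hf]; simp
    · rw [Nat.mod_eq_of_lt (by omega)]
      exact Finset.mem_image.mpr ⟨b, Finset.mem_univ _, by simp [hf, Ne.symm hab]⟩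
    · rw [Nat.mod_eq_of_lt (by omega)]
      exact Finset.mem_image.mpr ⟨e, Finset.mem_univ _,
        by simp [hf, Ne.symm hae, Ne.symm hbe]⟩
    · rw [Nat.mod_eq_of_lt (by omega)]
      intro hcon
      obtain ⟨w, _, hw⟩ := Finset.mem_image.mp hcon
      exact (hfP w).2.2 hw
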